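/- For n > p, a fixed U ∈ ℝ^{n×p} with UᵀU = I_p, and Ψ = E Λ Eᵀ with E = [U, U⊥] and eigenvalues λ₁ ≥ λ₂ ≥ … ≥ λₙ > 0, one has p·log det(Ψ) + n·log det(Uᵀ Ψ⁻¹ U) ≤ −(n−p)·log(λ₁/λ_p). -/

import Mathlib

open Matrix

/-- For `Ψ = E Λ Eᵀ` with `E` orthogonal whose first `p` columns are `U`
(`UᵀU = I_p`) and decreasing eigenvalues `λ₁ ≥ … ≥ λₙ > 0`,
`p·log det Ψ + n·log det(Uᵀ Ψ⁻¹ U) ≤ −(n−p)·log(λ₁/λ_p)`. -/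
theorem stmt10 {n p : ℕ} (hp : 0 < p) (hpn : p < n)
    (U : Matrix (Fin n) (Fin p) ℝ) (hU : Uᵀ * U = 1)
    (E : Matrix (Fin n) (Fin n) ℝ) (hE1 : Eᵀ * E = 1) (hE2 : E * Eᵀ = 1)
    (hEU : ∀ (i : Fin n) (j : Fin p), E i (Fin.castLE hpn.le j) = U i j)
    (lam : Fin n → ℝ) (hpos : ∀ i, 0 < lam i)
    (hdec : ∀ i j : Fin n, i ≤ j → lam j ≤ lam i) :
    (p : ℝ) * Real.log (E * Matrix.diagonal lam * Eᵀ).det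
      + (n : ℝ) * Real.log (Uᵀ * (E * Matrix.diagonal lam * Eᵀ)⁻¹ * U).det
      ≤ -((n : ℝ) - (p : ℝ)) *
          Real.log (lam ⟨0, hp.trans hpn⟩
            / lam ⟨p - 1, (Nat.sub_lt hp Nat.one_pos).trans hpn⟩) := by
  have hn : 0 < n := hp.trans hpn
  have hne : ∀ i, lam i ≠ 0 := fun i => (hpos i).ne'
  set D : Matrix (Fin n) (Fin n) ℝ := Matrix.diagonal lam with hD
  set D' : Matrix (Fin n) (Fin n) ℝ := Matrix.diagonal (fun i => (lam i)⁻¹) with hD'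
  -- determinant of Ψ
  have hdet : (E * D * Eᵀ).det = ∏ i, lam i := by
    rw [Matrix.det_mul, Matrix.det_mul]
    have h1 : E.det * Eᵀ.det = 1 := by rw [← Matrix.det_mul, hE2, Matrix.det_one]
    have : E.det * D.det * Eᵀ.det = D.det * (E.det * Eᵀ.det) := by ring
    rw [this, h1, mul_one, hD, Matrix.det_diagonal]
  -- inverse of Ψ
  have hDD : D * D' = 1 := by
    rw [hD, hD', Matrix.diagonal_mul_diagonal]
    ext i j
    by_cases h : i = j
    · subst h
      simp [Matrix.diagonal_apply, Matrix.one_apply, mul_inv_cancel₀ (hne i)]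
    · simp [Matrix.diagonal_apply, Matrix.one_apply, h]
  have hcancel : ∀ (X : Matrix (Fin n) (Fin n) ℝ), Eᵀ * (E * X) = X := fun X => by
    rw [← Matrix.mul_assoc, hE1, Matrix.one_mul]
  have hinv : (E * D * Eᵀ)⁻¹ = E * D' * Eᵀ := by
    apply Matrix.inv_eq_right_inv
    calc E * D * Eᵀ * (E * D' * Eᵀ) = E * (D * (Eᵀ * (E * (D' * Eᵀ)))) := by
          simp only [Matrix.mul_assoc]
      _ = E * (D * (D' * Eᵀ)) := by rw [hcancel]
      _ = E * ((D * D') * Eᵀ) := by rw [Matrix.mul_assoc]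
      _ = 1 := by rw [hDD, Matrix.one_mul, hE2]
  -- Eᵀ U
  have hEtU : ∀ k j, (Eᵀ * U) k j = if k = Fin.castLE hpn.le j then (1:ℝ) else 0 := by
    intro k j
    have h1 : (Eᵀ * U) k j = (Eᵀ * E) k (Fin.castLE hpn.le j) := by
      simp only [Matrix.mul_apply, Matrix.transpose_apply, hEU]
    rw [h1, hE1, Matrix.one_apply]
  -- middle matrix
  have hmid : Uᵀ * (E * D' * Eᵀ) * U
      = Matrix.diagonal (fun j : Fin p => (lam (Fin.castLE hpn.le j))⁻¹) := by
    have hassoc : Uᵀ * (E * D' * Eᵀ) * U = (Eᵀ * U)ᵀ * (D' * (Eᵀ * U)) := by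
      rw [Matrix.transpose_mul, Matrix.transpose_transpose]
      simp only [Matrix.mul_assoc]
    rw [hassoc]
    ext i j
    have hD'app : ∀ k l, D' k l = if k = l then (lam k)⁻¹ else 0 := fun k l => by
      rw [hD', Matrix.diagonal_apply]
    simp only [Matrix.mul_apply, Matrix.transpose_apply, hEtU, hD'app, ite_mul, mul_ite,
      one_mul, mul_one, zero_mul, mul_zero, Finset.sum_ite_eq, Finset.sum_ite_eq',
      Finset.mem_univ, if_true, Matrix.diagonal_apply]
    by_cases h : i = j
    · simp [h]
    · have h2 : Fin.castLE hpn.le i ≠ Fin.castLE hpn.le j := by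
        simpa [Fin.castLE_inj] using h
      simp only [h, h2, if_false]
      exact if_neg h2.symm
  rw [hdet, hinv, hmid, Matrix.det_diagonal]
  -- logs
  have hlog1 : Real.log (∏ i, lam i) = ∑ i, Real.log (lam i) :=
    Real.log_prod (fun i _ => hne i)
  have hlog2 : Real.log (∏ j : Fin p, (lam (Fin.castLE hpn.le j))⁻¹)
      = -∑ j : Fin p, Real.log (lam (Fin.castLE hpn.le j)) := by
    rw [Real.log_prod (fun j _ => inv_ne_zero (hne _))]
    simp [Real.log_inv, Finset.sum_neg_distrib]
  rw [hlog1, hlog2]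
  -- scalar sums via range
  set L : ℕ → ℝ := fun i => Real.log (lam ⟨i % n, Nat.mod_lt i hn⟩) with hL
  have hfin : ∀ (i : ℕ) (hi : i < n), L i = Real.log (lam ⟨i, hi⟩) := by
    intro i hi
    have key : (⟨i % n, Nat.mod_lt i hn⟩ : Fin n) = ⟨i, hi⟩ :=
      Fin.mk_eq_mk.mpr (Nat.mod_eq_of_lt hi)
    show Real.log (lam ⟨i % n, Nat.mod_lt i hn⟩) = _
    rw [key]
  have h1 : ∑ i, Real.log (lam i) = ∑ i ∈ Finset.range n, L i := by
    rw [← Fin.sum_univ_eq_sum_range]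
    refine Finset.sum_congr rfl fun i _ => ?_
    rw [hfin i.val i.isLt]
  have h2 : ∑ j : Fin p, Real.log (lam (Fin.castLE hpn.le j)) = ∑ j ∈ Finset.range p, L j := by
    rw [← Fin.sum_univ_eq_sum_range]
    refine Finset.sum_congr rfl fun j _ => ?_
    rw [hfin j.val (j.isLt.trans hpn)]
    rfl
  have hmono : ∀ i j : ℕ, i ≤ j → j < n → L j ≤ L i := by
    intro i j hij hj
    have hle : (⟨i % n, Nat.mod_lt i hn⟩ : Fin n) ≤ ⟨j % n, Nat.mod_lt j hn⟩ := by
      rw [Fin.mk_le_mk, Nat.mod_eq_of_lt (lt_of_le_of_lt hij hj), Nat.mod_eq_of_lt hj]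
      exact hij
    show Real.log (lam ⟨j % n, Nat.mod_lt j hn⟩) ≤ Real.log (lam ⟨i % n, Nat.mod_lt i hn⟩)
    exact Real.log_le_log (hpos _) (hdec _ _ hle)
  have hp1n : p - 1 < n := (Nat.sub_lt hp Nat.one_pos).trans hpn
  have hsplit : ∑ i ∈ Finset.range n, L i
      = ∑ i ∈ Finset.range p, L i + ∑ i ∈ Finset.Ico p n, L i := by
    rw [Finset.range_eq_Ico, Finset.range_eq_Ico]
    exact (Finset.sum_Ico_consecutive _ (Nat.zero_le p) hpn.le).symm
  have hS2 : ∑ i ∈ Finset.Ico p n, L i ≤ ((n:ℝ) - p) * L (p-1) := by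
    have := Finset.sum_le_card_nsmul (Finset.Ico p n) L (L (p-1)) (by
      intro x hx
      obtain ⟨hx1, hx2⟩ := Finset.mem_Ico.mp hx
      exact hmono (p-1) x (le_trans (Nat.sub_le p 1) hx1) hx2)
    rwa [Nat.card_Ico, nsmul_eq_mul, Nat.cast_sub hpn.le] at this
  have hS1 : L 0 + ((p:ℝ) - 1) * L (p-1) ≤ ∑ i ∈ Finset.range p, L i := by
    have hsp : ∑ i ∈ Finset.range p, L i
        = ∑ i ∈ Finset.range 1, L i + ∑ i ∈ Finset.Ico 1 p, L i := by
      rw [Finset.range_eq_Ico]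
      exact (Finset.sum_Ico_consecutive _ (Nat.zero_le 1) hp).symm
    rw [hsp, Finset.sum_range_one]
    have hlow := Finset.card_nsmul_le_sum (Finset.Ico 1 p) L (L (p-1)) (by
      intro x hx
      obtain ⟨hx1, hx2⟩ := Finset.mem_Ico.mp hx
      exact hmono x (p-1) (Nat.le_sub_one_of_lt hx2) hp1n)
    rw [Nat.card_Ico, nsmul_eq_mul, Nat.cast_sub hp] at hlow
    push_cast at hlow
    linarith
  have hrhs : Real.log (lam ⟨0, hp.trans hpn⟩
      / lam ⟨p - 1, (Nat.sub_lt hp Nat.one_pos).trans hpn⟩) = L 0 - L (p-1) := by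
    rw [Real.log_div (hne _) (hne _), hfin 0 hn, hfin (p-1) hp1n]
  rw [h1, h2, hsplit, hrhs]
  have hc : (p:ℝ) < n := by exact_mod_cast hpn
  have hp0 : (0:ℝ) < p := by exact_mod_cast hp
  nlinarith [mul_le_mul_of_nonneg_left hS2 hp0.le,
    mul_le_mul_of_nonneg_left hS1 (by linarith : (0:ℝ) ≤ (n:ℝ) - p)]
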